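/- Let N ≥ 2 be an integer and 1 < q < 2. Let u ∈ C¹([0,1]) be twice differentiable on (0,1] and satisfy u″(r) + ((N−1)/r) u′(r) + |u(r)|^{q−2}u(r) = 0 for every r ∈ (0,1], together with u′(0) = 0 and u′(1) = 0, and suppose u is not identically zero. Then u(0) ≠ 0, u(1) ≠ 0, and u has only finitely many zeros in (0,1). -/

import Mathlib

open Set

/-- Auxiliary: the energy of a solution never vanishes unless the solution is trivial. -/
theorem statement12_aux (N : ℕ) (hN : 2 ≤ N) (q : ℝ) (hq1 : 1 < q) (hq2 : q < 2)
    (u u' u'' : ℝ → ℝ)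
    (hu' : ∀ r ∈ Icc (0 : ℝ) 1, HasDerivWithinAt u (u' r) (Icc 0 1) r)
    (hu'c : ContinuousOn u' (Icc 0 1))
    (hu'' : ∀ r ∈ Ioc (0 : ℝ) 1, HasDerivWithinAt u' (u'' r) (Icc 0 1) r)
    (hode : ∀ r ∈ Ioc (0 : ℝ) 1,
      u'' r + (((N : ℝ) - 1) / r) * u' r + |u r| ^ (q - 2) * u r = 0)
    (hnontriv : ∃ r ∈ Icc (0 : ℝ) 1, u r ≠ 0) :
    ∀ r ∈ Icc (0 : ℝ) 1, u' r ^ 2 / 2 + |u r| ^ q / q ≠ 0 := by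
  have hq0 : (0:ℝ) < q := by linarith
  have hN1 : (0:ℝ) ≤ (N:ℝ) - 1 := by
    have : (2:ℝ) ≤ (N:ℝ) := by exact_mod_cast hN
    linarith
  set E : ℝ → ℝ := fun r => u' r ^ 2 / 2 + |u r| ^ q / q with hEdef
  show ∀ r ∈ Icc (0:ℝ) 1, E r ≠ 0
  have hEnonneg : ∀ r, 0 ≤ E r := by
    intro r
    have h1 := Real.rpow_nonneg (abs_nonneg (u r)) q
    have h2 := sq_nonneg (u' r)
    simp only [hEdef]
    positivity
  have hcu : ContinuousOn u (Icc 0 1) := fun r hr => (hu' r hr).continuousWithinAt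
  have hEc : ContinuousOn E (Icc 0 1) := by
    apply ContinuousOn.add
    · exact (hu'c.pow 2).div_const 2
    · exact (hcu.abs.rpow_const (fun x _ => Or.inr hq0.le)).div_const q
  have hEderivWithin : ∀ r ∈ Ioc (0:ℝ) 1,
      HasDerivWithinAt E (-((((N:ℝ)-1)/r) * u' r ^ 2)) (Icc 0 1) r := by
    intro r hr
    have hrI : r ∈ Icc (0:ℝ) 1 := ⟨hr.1.le, hr.2⟩
    have h1 : HasDerivWithinAt (fun s => u' s ^ 2 / 2) (u'' r * u' r) (Icc 0 1) r := by
      have := ((hu'' r hr).pow 2).div_const 2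
      refine this.congr_deriv ?_
      push_cast
      ring
    have h2 : HasDerivWithinAt (fun s => |u s| ^ q / q)
        (|u r| ^ (q-2) * u r * u' r) (Icc 0 1) r := by
      have := ((hasDerivAt_abs_rpow (u r) hq1).comp_hasDerivWithinAt r (hu' r hrI)).div_const q
      refine this.congr_deriv ?_
      field_simp
    have h3 := h1.add h2
    refine h3.congr_deriv ?_
    have hode' := hode r hr
    have hrne : r ≠ 0 := ne_of_gt hr.1
    linear_combination (u' r) * hode'
  have hEderiv : ∀ r ∈ Ioo (0:ℝ) 1, HasDerivAt E (-((((N:ℝ)-1)/r) * u' r ^ 2)) r :=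
    fun r hr => (hEderivWithin r ⟨hr.1, hr.2.le⟩).hasDerivAt (Icc_mem_nhds hr.1 hr.2)
  have hEanti : AntitoneOn E (Icc 0 1) := by
    apply antitoneOn_of_deriv_nonpos (convex_Icc 0 1) hEc
    · intro r hr
      rw [interior_Icc] at hr
      exact (hEderiv r hr).differentiableAt.differentiableWithinAt
    · intro r hr
      rw [interior_Icc] at hr
      rw [(hEderiv r hr).deriv]
      have h1 : 0 ≤ (((N:ℝ)-1)/r) * u' r ^ 2 := by
        have := hr.1
        positivity
      linarith
  intro r0 hr0 hE0
  -- Forward: E = 0 on [r0, 1]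
  have hE1 : E 1 = 0 := le_antisymm
    (hE0 ▸ hEanti hr0 ⟨zero_le_one, le_rfl⟩ hr0.2) (hEnonneg 1)
  -- Backward: E = 0 on (0, 1]
  have hbwd : ∀ a ∈ Ioc (0:ℝ) 1, E a = 0 := by
    intro a ha
    set K : ℝ := 2 * ((N:ℝ)-1) / a with hK
    have hKnn : 0 ≤ K := by
      have := ha.1
      positivity
    have hFmono : MonotoneOn (fun r => Real.exp (K * r) * E r) (Icc a 1) := by
      apply monotoneOn_of_deriv_nonneg (convex_Icc a 1)
      · exact ((Real.continuous_exp.comp (continuous_const.mul continuous_id)).continuousOn).mul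
          (hEc.mono (Icc_subset_Icc ha.1.le le_rfl))
      · intro r hr
        rw [interior_Icc] at hr
        have hr01 : r ∈ Ioo (0:ℝ) 1 := ⟨ha.1.trans hr.1, hr.2⟩
        have hd : HasDerivAt (fun r => Real.exp (K * r) * E r)
            (K * Real.exp (K * r) * E r + Real.exp (K * r) * (-((((N:ℝ)-1)/r) * u' r ^ 2))) r := by
          have he : HasDerivAt (fun s => Real.exp (K * s)) (K * Real.exp (K * r)) r := by
            have h0 : HasDerivAt (fun s : ℝ => K * s) K r := by
              simpa using (hasDerivAt_id r).const_mul K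
            simpa [mul_comm] using h0.exp
          exact he.mul (hEderiv r hr01)
        exact hd.differentiableAt.differentiableWithinAt
      · intro r hr
        rw [interior_Icc] at hr
        have hr01 : r ∈ Ioo (0:ℝ) 1 := ⟨ha.1.trans hr.1, hr.2⟩
        have hd : HasDerivAt (fun r => Real.exp (K * r) * E r)
            (K * Real.exp (K * r) * E r + Real.exp (K * r) * (-((((N:ℝ)-1)/r) * u' r ^ 2))) r := by
          have he : HasDerivAt (fun s => Real.exp (K * s)) (K * Real.exp (K * r)) r := by
            have h0 : HasDerivAt (fun s : ℝ => K * s) K r := by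
              simpa using (hasDerivAt_id r).const_mul K
            simpa [mul_comm] using h0.exp
          exact he.mul (hEderiv r hr01)
        rw [hd.deriv]
        have hexp : 0 < Real.exp (K * r) := Real.exp_pos _
        have hle1 : (((N:ℝ)-1)/r) * u' r ^ 2 ≤ (((N:ℝ)-1)/a) * u' r ^ 2 := by
          have h1 : ((N:ℝ)-1)/r ≤ ((N:ℝ)-1)/a := by
            apply div_le_div_of_nonneg_left hN1 ha.1 hr.1.le
          exact mul_le_mul_of_nonneg_right h1 (sq_nonneg _)
        have hle2 : u' r ^ 2 ≤ 2 * E r := by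
          have h5 : 0 ≤ |u r| ^ q / q :=
            div_nonneg (Real.rpow_nonneg (abs_nonneg (u r)) q) hq0.le
          simp only [hEdef]
          linarith
        have hc : 0 ≤ ((N:ℝ)-1)/a := div_nonneg hN1 ha.1.le
        have hle3 : (((N:ℝ)-1)/a) * u' r ^ 2 ≤ K * E r := by
          calc (((N:ℝ)-1)/a) * u' r ^ 2 ≤ (((N:ℝ)-1)/a) * (2 * E r) :=
                mul_le_mul_of_nonneg_left hle2 hc
            _ = K * E r := by rw [hK]; ring
        have hfinal : Real.exp (K * r) * ((((N:ℝ)-1)/r) * u' r ^ 2)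
            ≤ Real.exp (K * r) * (K * E r) :=
          mul_le_mul_of_nonneg_left (hle1.trans hle3) hexp.le
        nlinarith [hfinal]
    have hle := hFmono ⟨le_rfl, ha.2⟩ ⟨ha.2, le_rfl⟩ ha.2
    simp only [hE1, mul_zero] at hle
    have hexp : 0 < Real.exp (K * a) := Real.exp_pos _
    have := hEnonneg a
    nlinarith
  -- hence u vanishes on (0,1]
  have huz : ∀ r ∈ Ioc (0:ℝ) 1, u r = 0 := by
    intro r hr
    have h := hbwd r hr
    have h1 := Real.rpow_nonneg (abs_nonneg (u r)) q
    have h2 := sq_nonneg (u' r)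
    have hEr : E r = u' r ^ 2 / 2 + |u r| ^ q / q := rfl
    rw [hEr] at h
    have h1' : 0 ≤ |u r| ^ q / q := div_nonneg h1 hq0.le
    have h6 : |u r| ^ q / q = 0 := by linarith
    have h3 : |u r| ^ q = 0 := by
      rcases div_eq_zero_iff.mp h6 with h | h
      · exact h
      · exact absurd h (ne_of_gt hq0)
    have h4 : |u r| = 0 := by
      by_contra hne
      have : (0:ℝ) < |u r| := lt_of_le_of_ne (abs_nonneg _) (Ne.symm hne)
      exact absurd h3 (ne_of_gt (Real.rpow_pos_of_pos this q))
    exact abs_eq_zero.mp h4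
  -- and at 0 by continuity
  have hu0 : u 0 = 0 := by
    have h1 : Filter.Tendsto u (nhdsWithin 0 (Ioc (0:ℝ) 1)) (nhds (u 0)) :=
      ((hcu 0 ⟨le_rfl, zero_le_one⟩).mono Ioc_subset_Icc_self)
    have h2 : Filter.Tendsto u (nhdsWithin 0 (Ioc (0:ℝ) 1)) (nhds 0) := by
      apply Filter.Tendsto.congr' _ tendsto_const_nhds
      filter_upwards [self_mem_nhdsWithin] with x hx
      exact (huz x hx).symm
    haveI : (nhdsWithin (0:ℝ) (Ioc (0:ℝ) 1)).NeBot :=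
      left_nhdsWithin_Ioc_neBot zero_lt_one
    exact tendsto_nhds_unique h1 h2
  obtain ⟨r, hr, hur⟩ := hnontriv
  rcases eq_or_lt_of_le hr.1 with h | h
  · exact hur (h ▸ hu0)
  · exact hur (huz r ⟨h, hr.2⟩)

theorem statement12 (N : ℕ) (hN : 2 ≤ N) (q : ℝ) (hq1 : 1 < q) (hq2 : q < 2)
    (u u' u'' : ℝ → ℝ)
    (hu' : ∀ r ∈ Icc (0 : ℝ) 1, HasDerivWithinAt u (u' r) (Icc 0 1) r)
    (hu'c : ContinuousOn u' (Icc 0 1))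
    (hu'' : ∀ r ∈ Ioc (0 : ℝ) 1, HasDerivWithinAt u' (u'' r) (Icc 0 1) r)
    (hode : ∀ r ∈ Ioc (0 : ℝ) 1,
      u'' r + (((N : ℝ) - 1) / r) * u' r + |u r| ^ (q - 2) * u r = 0)
    (hbc0 : u' 0 = 0) (hbc1 : u' 1 = 0)
    (hnontriv : ∃ r ∈ Icc (0 : ℝ) 1, u r ≠ 0) :
    u 0 ≠ 0 ∧ u 1 ≠ 0 ∧ {r ∈ Ioo (0 : ℝ) 1 | u r = 0}.Finite := by
  have hq0 : (0:ℝ) < q := by linarith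
  have hEne := statement12_aux N hN q hq1 hq2 u u' u'' hu' hu'c hu'' hode hnontriv
  have hcu : ContinuousOn u (Icc 0 1) := fun r hr => (hu' r hr).continuousWithinAt
  have hu0 : u 0 ≠ 0 := by
    intro h
    apply hEne 0 ⟨le_rfl, zero_le_one⟩
    rw [h, hbc0, abs_zero, Real.zero_rpow (ne_of_gt hq0)]
    norm_num
  have hu1 : u 1 ≠ 0 := by
    intro h
    apply hEne 1 ⟨zero_le_one, le_rfl⟩
    rw [h, hbc1, abs_zero, Real.zero_rpow (ne_of_gt hq0)]
    norm_num
  refine ⟨hu0, hu1, ?_⟩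
  by_contra hfin
  have hZinf : {r ∈ Ioo (0:ℝ) 1 | u r = 0}.Infinite := hfin
  have hZsub : {r ∈ Ioo (0:ℝ) 1 | u r = 0} ⊆ Icc (0:ℝ) 1 :=
    fun r hr => Ioo_subset_Icc_self hr.1
  obtain ⟨x, hxK, hacc⟩ := hZinf.exists_accPt_of_subset_isCompact isCompact_Icc hZsub
  set Z := {r ∈ Ioo (0:ℝ) 1 | u r = 0} with hZ
  set L := nhdsWithin x {x}ᶜ ⊓ Filter.principal Z with hL
  haveI hLne : L.NeBot := hacc
  have hLle : L ≤ nhdsWithin x (Icc 0 1) := by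
    rw [nhdsWithin]
    exact le_inf (inf_le_left.trans nhdsWithin_le_nhds)
      (inf_le_right.trans (Filter.principal_mono.2 hZsub))
  have hZL : Z ∈ L := by
    rw [hL]
    exact Filter.mem_inf_of_right (Filter.mem_principal_self Z)
  -- u x = 0
  have hux : u x = 0 := by
    have h1 : Filter.Tendsto u L (nhds (u x)) := (hcu x hxK).mono_left hLle
    have h2 : Filter.Tendsto u L (nhds 0) := by
      apply Filter.Tendsto.congr' _ tendsto_const_nhds
      filter_upwards [hZL] with y hy
      exact hy.2.symm
    exact tendsto_nhds_unique h1 h2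
  have hx0 : x ≠ 0 := fun h => hu0 (h ▸ hux)
  have hx1 : x ≠ 1 := fun h => hu1 (h ▸ hux)
  have hxIoo : x ∈ Ioo (0:ℝ) 1 :=
    ⟨lt_of_le_of_ne hxK.1 (Ne.symm hx0), lt_of_le_of_ne hxK.2 hx1⟩
  have hder : HasDerivAt u (u' x) x :=
    (hu' x hxK).hasDerivAt (Icc_mem_nhds hxIoo.1 hxIoo.2)
  have hslope : Filter.Tendsto (slope u x) (nhdsWithin x {x}ᶜ) (nhds (u' x)) :=
    hasDerivAt_iff_tendsto_slope.mp hder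
  have h1 : Filter.Tendsto (slope u x) L (nhds (u' x)) := hslope.mono_left inf_le_left
  have h2 : Filter.Tendsto (slope u x) L (nhds 0) := by
    apply Filter.Tendsto.congr' _ tendsto_const_nhds
    filter_upwards [hZL] with y hy
    simp [slope_def_field, hy.2, hux]
  have hux' : u' x = 0 := tendsto_nhds_unique h1 h2
  apply hEne x hxK
  rw [hux, hux', abs_zero, Real.zero_rpow (ne_of_gt hq0)]
  norm_num
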